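/- Let β be an irrational real number of finite type η = 1, let 1/2 < γ < 1, and let x ∈ (0, 2π). Then the set S(x) = { n ≥ 1 : |x − 2π{nβ}| ≤ 2π n^{−γ} } is infinite. -/

import Mathlib

lemma finite_bddden (M : ℕ) (C : ℝ) : {r : ℚ | r.den ≤ M ∧ |(r : ℝ)| ≤ C}.Finite := by
  set A : ℤ := ⌈C * M⌉ with hA
  apply Set.Finite.of_finite_image (f := fun r : ℚ => (r.num, r.den))
  · apply Set.Finite.subset ((Set.finite_Icc (-A) A).prod (Set.finite_Icc 0 M))
    rintro ⟨a, b⟩ ⟨r, ⟨hd, hC⟩, hab⟩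
    simp only [Prod.mk.injEq] at hab
    obtain ⟨ha, hb⟩ := hab
    subst ha; subst hb
    have hden0 : (0:ℝ) < (r.den : ℝ) := by exact_mod_cast r.pos
    have hnum : |(r.num : ℝ)| = |(r:ℝ)| * (r.den : ℝ) := by
      rw [Rat.cast_def, abs_div, abs_of_pos hden0, div_mul_cancel₀ _ hden0.ne']
    have h1 : |(r.num : ℝ)| ≤ C * M := by
      rw [hnum]
      exact mul_le_mul hC (by exact_mod_cast hd) hden0.le ((abs_nonneg _).trans hC)
    have h2 : |r.num| ≤ A := by
      have := h1.trans (Int.le_ceil (C * M))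
      exact_mod_cast (by push_cast; exact this : ((|r.num| : ℤ) : ℝ) ≤ (A : ℝ))
    constructor
    · simpa [Set.mem_Icc] using abs_le.mp h2
    · simp [Set.mem_Icc, hd]
  · intro r _ s _ h
    simp only [Prod.mk.injEq] at h
    exact Rat.ext h.1 h.2

/-- `⟨z⟩`: the distance from `z` to the nearest integer. -/
noncomputable def nint (z : ℝ) : ℝ := min (Int.fract z) (1 - Int.fract z)

/-- `β` is an irrational of finite type `η`: `η` is the supremum of all `τ` such that
`liminf_{q→∞} q^τ ⟨qβ⟩ = 0`. -/
def IsFiniteType (β η : ℝ) : Prop :=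
  IsLUB {τ : ℝ | Filter.liminf (fun q : ℕ => (q : ℝ) ^ τ * nint ((q : ℝ) * β)) Filter.atTop = 0} η

/-- Kicked harmonic oscillator: for `β` irrational of type `η = 1`, `1/2 < γ < 1` and
`x ∈ (0, 2π)`, the set `S(x) = {n ≥ 1 : |x − 2π{nβ}| ≤ 2π n^{−γ}}` is infinite. -/
theorem S_infinite_harmonic_oscillator
    (β : ℝ) (hβ : Irrational β) (htype : IsFiniteType β 1)
    (γ : ℝ) (hγ1 : 1 / 2 < γ) (hγ2 : γ < 1)
    (x : ℝ) (hx : x ∈ Set.Ioo 0 (2 * Real.pi)) :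
    {n : ℕ | 1 ≤ n ∧
      |x - 2 * Real.pi * Int.fract ((n : ℝ) * β)| ≤ 2 * Real.pi * (n : ℝ) ^ (-γ)}.Infinite := by
  obtain ⟨hx0, hx2π⟩ := hx
  have hπ : (0:ℝ) < 2 * Real.pi := by positivity
  set t : ℝ := x / (2 * Real.pi) with ht_def
  have ht0 : 0 < t := div_pos hx0 hπ
  have ht1 : t < 1 := (div_lt_one hπ).mpr hx2π
  have hxt : 2 * Real.pi * t = x := by
    rw [ht_def, mul_comm (2 * Real.pi) _, div_mul_cancel₀ _ hπ.ne']
  apply Set.infinite_of_not_bddAbove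
  rw [not_bddAbove_iff]
  intro N
  by_contra hcon
  push_neg at hcon
  -- eventual conditions
  have hev1 : ∀ᶠ q : ℕ in Filter.atTop, ((N:ℝ) + 2) ≤ (1 - t) * q := by
    have h1t : (0:ℝ) < 1 - t := by linarith
    exact (tendsto_natCast_atTop_atTop.const_mul_atTop h1t).eventually_ge_atTop _
  have hev2 : ∀ᶠ q : ℕ in Filter.atTop, ((N:ℝ) + 2) ≤ (q:ℝ) ^ ((1:ℝ) - γ) := by
    exact ((tendsto_rpow_atTop (by linarith)).comp
      tendsto_natCast_atTop_atTop).eventually_ge_atTop _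
  obtain ⟨M, hM⟩ := Filter.eventually_atTop.mp (hev1.and hev2)
  -- pick a good rational approximation with large denominator
  have hinf := Real.infinite_rat_abs_sub_lt_one_div_den_sq_of_irrational hβ
  obtain ⟨r, hr, hrT⟩ := (hinf.diff (finite_bddden M (|β| + 1))).nonempty
  simp only [Set.mem_setOf_eq] at hr
  have hden1 : (1:ℝ) ≤ (r.den : ℝ) := by exact_mod_cast r.pos
  have hrb : |(r:ℝ)| ≤ |β| + 1 := by
    have h1 : |β - (r:ℝ)| < 1 := hr.trans_le (by
      rw [div_le_one (by positivity)]
      nlinarith)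
    have h2 := abs_sub_abs_le_abs_sub (r:ℝ) β
    rw [abs_sub_comm] at h2
    linarith
  have hqM : M < r.den := by
    by_contra hle
    exact hrT ⟨by omega, hrb⟩
  obtain ⟨hMq1, hMq2⟩ := hM r.den (le_of_lt hqM)
  set q : ℕ := r.den with hq_def
  have hq0 : (0:ℝ) < (q:ℝ) := by exact_mod_cast r.pos
  have he : |β - (r:ℝ)| < 1 / (q:ℝ)^2 := hr
  -- Bezout coefficients
  have hcop : IsCoprime (r.num) ((q:ℕ) : ℤ) := by
    rw [Int.isCoprime_iff_gcd_eq_one]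
    simpa [Int.gcd] using r.reduced
  obtain ⟨a, b, hab⟩ := hcop
  -- the targets and the solutions
  set K : ℕ → ℤ := fun j => ⌈t * q⌉ + j with hK_def
  set nn : ℕ → ℕ := fun j => ((a * K j) % q).toNat with hnn_def
  have hceil_lb : t * q ≤ (⌈t * q⌉ : ℝ) := Int.le_ceil _
  have hceil_ub : (⌈t * q⌉ : ℝ) ≤ t * q + 1 := by
    have := Int.ceil_lt_add_one (t * q); linarith
  have hK1 : ∀ j : ℕ, 1 ≤ K j := by
    intro j
    have : 0 < ⌈t * q⌉ := Int.ceil_pos.mpr (by positivity)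
    simp only [hK_def]; omega
  have hKR :  ∀ j : ℕ, (K j : ℝ) = (⌈t * q⌉ : ℝ) + j := by
    intro j; simp only [hK_def]; push_cast; ring
  have hKub : ∀ j : ℕ, j ≤ N → (K j : ℝ) ≤ t * q + 1 + N := by
    intro j hj
    have hjN : (j:ℝ) ≤ (N:ℝ) := by exact_mod_cast hj
    rw [hKR]; linarith
  have hKq : ∀ j : ℕ, j ≤ N → K j ≤ (q:ℤ) - 1 := by
    intro j hj
    have hR : (K j : ℝ) ≤ (((q:ℤ) - 1 : ℤ) : ℝ) := by
      have := hKub j hj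
      push_cast
      nlinarith [hMq1]
    exact_mod_cast hR
  have hq0' : ((q:ℕ):ℤ) ≠ 0 := by exact_mod_cast r.pos.ne'
  have hnn_eq : ∀ j : ℕ, (nn j : ℤ) = (a * K j) % q := by
    intro j
    simp only [hnn_def]
    exact Int.toNat_of_nonneg (Int.emod_nonneg _ hq0')
  -- congruence property
  have hmod : ∀ j : ℕ, ((q:ℕ) : ℤ) ∣ (nn j : ℤ) * r.num - K j := by
    intro j
    rw [hnn_eq]
    have h1 : (a * K j) % q ≡ a * K j [ZMOD (q:ℕ)] := Int.emod_emod_of_dvd _ dvd_rfl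
    have h2 : ((a * K j) % q) * r.num ≡ (a * K j) * r.num [ZMOD (q:ℕ)] := h1.mul_right _
    have h3 : (a * K j) * r.num ≡ K j [ZMOD (q:ℕ)] := by
      have hd : (q:ℤ) ∣ K j - (a * K j) * r.num := ⟨K j * b, by linear_combination (-(K j)) * hab⟩
      exact Int.modEq_iff_dvd.mpr hd
    exact Int.ModEq.dvd (h2.trans h3).symm
  -- bounds on nn j
  have hnn_ub : ∀ j : ℕ, (nn j : ℤ) ≤ (q:ℤ) - 1 := by
    intro j
    have := Int.emod_lt_of_pos (a * K j) (by omega : (0:ℤ) < (q:ℕ))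
    rw [hnn_eq]; omega
  have hnn_pos : ∀ j : ℕ, j ≤ N → 1 ≤ nn j := by
    intro j hj
    rcases Nat.eq_zero_or_pos (nn j) with h0 | h
    · exfalso
      have hd : ((q:ℕ):ℤ) ∣ K j := by
        have := hmod j
        rw [h0] at this
        simpa using (dvd_neg.mpr this)
      have : K j = 0 := Int.eq_zero_of_abs_lt_dvd hd (by
        have h1 := hK1 j
        have h2 := hKq j hj
        rw [abs_of_pos (by omega)]
        omega)
      have := hK1 j; omega
    · exact h
  -- main membership claim
  have hmem : ∀ j : ℕ, j ≤ N → nn j ∈ {n : ℕ | 1 ≤ n ∧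
      |x - 2 * Real.pi * Int.fract ((n : ℝ) * β)| ≤ 2 * Real.pi * (n : ℝ) ^ (-γ)} := by
    intro j hj
    have hn1 := hnn_pos j hj
    have hnq := hnn_ub j
    have hnR1 : (1:ℝ) ≤ (nn j : ℝ) := by exact_mod_cast hn1
    have hnRq : (nn j : ℝ) ≤ (q:ℝ) := by
      have : ((nn j : ℤ) : ℝ) ≤ (((q:ℤ) - 1 : ℤ) : ℝ) := by exact_mod_cast hnq
      push_cast at this; linarith
    obtain ⟨m, hm⟩ := hmod j
    have hmR : (nn j : ℝ) * (r.num : ℝ) = (q:ℝ) * m + (K j : ℝ) := by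
      have hZ : (nn j : ℤ) * r.num = (q:ℤ) * m + K j := by linarith [hm]
      exact_mod_cast hZ
    have hnr : (nn j : ℝ) * (r:ℝ) = (m:ℝ) + (K j : ℝ)/(q:ℝ) := by
      rw [Rat.cast_def]
      field_simp
      linear_combination (q:ℝ) * hmR
    set u : ℝ := (K j : ℝ)/(q:ℝ) + (nn j : ℝ) * (β - (r:ℝ)) with hu_def
    have hu_eq : (nn j : ℝ) * β = (m:ℝ) + u := by
      rw [hu_def]; linear_combination hnr
    have hwe : |(nn j : ℝ) * (β - (r:ℝ))| < 1/(q:ℝ) := by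
      have h1 : |(nn j : ℝ) * (β - (r:ℝ))| = (nn j : ℝ) * |β - (r:ℝ)| := by
        rw [abs_mul, abs_of_nonneg (by linarith : (0:ℝ) ≤ (nn j : ℝ))]
      have h2 : (nn j : ℝ) * |β - (r:ℝ)| < (nn j : ℝ) * (1/(q:ℝ)^2) :=
        mul_lt_mul_of_pos_left he (by linarith)
      have h3 : (nn j : ℝ) * (1/(q:ℝ)^2) ≤ (q:ℝ) * (1/(q:ℝ)^2) :=
        mul_le_mul_of_nonneg_right hnRq (by positivity)
      have h4 : (q:ℝ) * (1/(q:ℝ)^2) = 1/(q:ℝ) := by field_simp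
      linarith
    have habs := abs_lt.mp hwe
    have hKR1 : (1:ℝ) ≤ (K j : ℝ) := by exact_mod_cast hK1 j
    have hKRq : (K j : ℝ) ≤ (q:ℝ) - 1 := by
      have : ((K j : ℤ) : ℝ) ≤ (((q:ℤ) - 1 : ℤ) : ℝ) := by exact_mod_cast hKq j hj
      push_cast at this; linarith
    have hds1 : (1:ℝ)/(q:ℝ) ≤ (K j : ℝ)/(q:ℝ) := by gcongr
    have hds2 : (K j : ℝ)/(q:ℝ) ≤ ((q:ℝ) - 1)/(q:ℝ) := by gcongr
    have hqq1 : ((q:ℝ) - 1)/(q:ℝ) + 1/(q:ℝ) = 1 := by field_simp; ring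
    have hu0 : 0 ≤ u := by rw [hu_def]; linarith
    have hu1 : u < 1 := by rw [hu_def]; linarith
    have hfract : Int.fract ((nn j : ℝ) * β) = u := by
      rw [hu_eq, Int.fract_intCast_add, Int.fract_eq_self.mpr ⟨hu0, hu1⟩]
    -- distance estimate
    have hKlow : t * (q:ℝ) ≤ (K j : ℝ) := by
      rw [hKR]; have : (0:ℝ) ≤ (j:ℝ) := by positivity
      linarith
    have hKhigh : (K j : ℝ) ≤ t * (q:ℝ) + 1 + (N:ℝ) := hKub j hj
    have hsplit : (K j : ℝ)/(q:ℝ) - t = ((K j : ℝ) - t * (q:ℝ))/(q:ℝ) := by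
      field_simp
    have hd1 : 0 ≤ ((K j : ℝ) - t * (q:ℝ))/(q:ℝ) := by
      apply div_nonneg _ hq0.le; linarith
    have hd2 : ((K j : ℝ) - t * (q:ℝ))/(q:ℝ) ≤ (1 + (N:ℝ))/(q:ℝ) := by
      gcongr; linarith
    have hadd : ((1:ℝ) + (N:ℝ))/(q:ℝ) + 1/(q:ℝ) = ((N:ℝ) + 2)/(q:ℝ) := by ring
    have hone : (1:ℝ)/(q:ℝ) ≤ ((N:ℝ) + 2)/(q:ℝ) := by
      gcongr; · linarith
    have hdist : |t - u| ≤ ((N:ℝ) + 2)/(q:ℝ) := by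
      rw [abs_le]
      constructor
      · rw [hu_def]; linarith
      · rw [hu_def]; linarith
    -- power estimates
    have hqpow : (q:ℝ) ^ ((1:ℝ) - γ) = (q:ℝ) ^ (-γ) * (q:ℝ) := by
      rw [show (1:ℝ) - γ = -γ + 1 by ring, Real.rpow_add hq0, Real.rpow_one]
    have hpow1 : ((N:ℝ) + 2)/(q:ℝ) ≤ (q:ℝ) ^ (-γ) := by
      rw [div_le_iff₀ hq0]
      calc ((N:ℝ) + 2) ≤ (q:ℝ) ^ ((1:ℝ) - γ) := hMq2
        _ = (q:ℝ) ^ (-γ) * (q:ℝ) := hqpow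
    have hpow2 : (q:ℝ) ^ (-γ) ≤ (nn j : ℝ) ^ (-γ) :=
      Real.rpow_le_rpow_of_nonpos (by linarith) hnRq (by linarith)
    refine ⟨hn1, ?_⟩
    rw [hfract, ← hxt]
    have heq : 2 * Real.pi * t - 2 * Real.pi * u = 2 * Real.pi * (t - u) := by ring
    rw [heq, abs_mul, abs_of_pos hπ]
    exact mul_le_mul_of_nonneg_left (hdist.trans (hpow1.trans hpow2)) hπ.le
  -- pigeonhole
  have hinj : ∀ j j' : ℕ, j ≤ N → j' ≤ N → nn j = nn j' → j = j' := by
    intro j j' hj hj' hnnjj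
    have h1 := hmod j
    have h2 := hmod j'
    rw [hnnjj] at h1
    have hd : ((q:ℕ):ℤ) ∣ K j' - K j := by
      have h3 := dvd_sub h1 h2
      have h4 : ((nn j' : ℤ) * r.num - K j) - ((nn j' : ℤ) * r.num - K j') = K j' - K j := by
        ring
      rwa [h4] at h3
    have hNq' : (N:ℤ) < (q:ℤ) := by
      have htq : 0 < t * (q:ℝ) := mul_pos ht0 hq0
      have hexp : (1-t)*(q:ℝ) = (q:ℝ) - t*(q:ℝ) := by ring
      have : (N:ℝ) < (q:ℝ) := by linarith
      exact_mod_cast this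
    have hKdiff : K j' - K j = (j':ℤ) - (j:ℤ) := by
      simp only [hK_def]; ring
    have hz : K j' - K j = 0 := by
      apply Int.eq_zero_of_abs_lt_dvd hd
      rw [hKdiff, abs_lt]
      constructor <;> [skip; skip] <;> omega
    rw [hKdiff] at hz
    omega
  have hmaps : ∀ j ∈ Finset.range (N+1), nn j ∈ Finset.Icc 1 N := by
    intro j hj
    have hjN : j ≤ N := by
      have := Finset.mem_range.mp hj; omega
    exact Finset.mem_Icc.mpr ⟨hnn_pos j hjN, hcon _ (hmem j hjN)⟩
  have hcard : (Finset.Icc 1 N).card < (Finset.range (N+1)).card := by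
    rw [Nat.card_Icc, Finset.card_range]; omega
  obtain ⟨j, hj, j', hj', hne, heq⟩ :=
    Finset.exists_ne_map_eq_of_card_lt_of_maps_to hcard hmaps
  exact hne (hinj j j' (by have := Finset.mem_range.mp hj; omega)
    (by have := Finset.mem_range.mp hj'; omega) heq)
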